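/- arXiv:2206.13512 — 2 statements merged into one kernel-verified Lean document; each statement's English description precedes it below -/
import Mathlib

section
/- A set A is G-paradoxical if and only if it contains two disjoint subsets A₁ and A₂, each G-equidecomposable with A. -/
open scoped Pointwise
open Set Function

/-- `A` and `B` are `G`-equidecomposable: there are finite partitions
`A = A₁ ∪ … ∪ Aₙ` and `B = B₁ ∪ … ∪ Bₙ` into pairwise disjoint pieces and
`g₁, …, gₙ ∈ G` with `Bᵢ = gᵢ • Aᵢ`. -/
def EquidecompG (G : Type*) {X : Type*} [Group G] [MulAction G X] (A B : Set X) : Prop :=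
  ∃ (n : ℕ) (P : Fin n → Set X) (g : Fin n → G),
    Pairwise (Function.onFun Disjoint P) ∧ (⋃ i, P i) = A ∧
    Pairwise (Function.onFun Disjoint fun i => g i • P i) ∧ (⋃ i, g i • P i) = B

/-- `E` is `G`-paradoxical: `E` is nonempty and splits into two disjoint pieces,
each `G`-equidecomposable with `E`. -/
def Paradoxical (G : Type*) {X : Type*} [Group G] [MulAction G X] (E : Set X) : Prop :=
  E.Nonempty ∧ ∃ A B : Set X, A ∪ B = E ∧ Disjoint A B ∧
    EquidecompG G A E ∧ EquidecompG G B E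

lemma EquidecompG.symm' {G X : Type*} [Group G] [MulAction G X] {A B : Set X}
    (h : EquidecompG G A B) : EquidecompG G B A := by
  obtain ⟨n, P, g, hd, hA, hd', hB⟩ := h
  refine ⟨n, fun i => g i • P i, fun i => (g i)⁻¹, hd', hB, ?_, ?_⟩
  · simpa only [inv_smul_smul] using hd
  · simpa only [inv_smul_smul] using hA

lemma exists_map_of_equidecomp {G X : Type*} [Group G] [MulAction G X] {A B : Set X}
    (h : EquidecompG G A B) :
    ∃ f : X → X, Set.InjOn f A ∧ f '' A = B ∧
      ∃ s : Finset G, ∀ a ∈ A, ∃ g' ∈ s, f a = g' • a := by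
  classical
  obtain ⟨n, P, g, hd, hA, hd', hB⟩ := h
  set f : X → X := fun x => if h : ∃ i, x ∈ P i then g h.choose • x else x with hf
  have hfP : ∀ {i : Fin n} {x : X}, x ∈ P i → f x = g i • x := by
    intro i x hx
    have hex : ∃ j, x ∈ P j := ⟨i, hx⟩
    have hch : hex.choose = i := by
      by_contra hne
      exact Set.disjoint_left.mp (hd hne) hex.choose_spec hx
    simp only [hf, dif_pos hex, hch]
  have memA : ∀ {x : X}, x ∈ A → ∃ i, x ∈ P i := by
    intro x hx
    rw [← hA] at hx
    exact mem_iUnion.mp hx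
  have himgP : ∀ i, f '' P i = g i • P i := by
    intro i
    rw [show g i • P i = (fun x => g i • x) '' P i from (Set.image_smul).symm]
    exact image_congr fun x hx => hfP hx
  refine ⟨f, ?_, ?_, Finset.image g Finset.univ, ?_⟩
  · intro a ha b hb hab
    obtain ⟨i, hai⟩ := memA ha
    obtain ⟨j, hbj⟩ := memA hb
    rw [hfP hai, hfP hbj] at hab
    rcases eq_or_ne i j with rfl | hne
    · exact smul_left_cancel (g i) hab
    · exact absurd (hab ▸ smul_mem_smul_set hai) fun hmem =>
        Set.disjoint_left.mp (hd' hne) hmem (smul_mem_smul_set hbj)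
  · rw [← hA, image_iUnion]
    simp_rw [himgP]
    exact hB
  · intro a ha
    obtain ⟨i, hai⟩ := memA ha
    exact ⟨g i, Finset.mem_image_of_mem g (Finset.mem_univ i), hfP hai⟩

lemma equidecomp_of_map {G X : Type*} [Group G] [MulAction G X] {A B : Set X}
    (f : X → X) (hinj : Set.InjOn f A) (himg : f '' A = B)
    (s : Finset G) (hs : ∀ a ∈ A, ∃ g ∈ s, f a = g • a) :
    EquidecompG G A B := by
  classical
  set g : Fin s.card → G := fun i => (s.equivFin.symm i : G) with hg
  set P : Fin s.card → Set X :=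
    fun i => {a | a ∈ A ∧ f a = g i • a ∧ ∀ j, f a = g j • a → i ≤ j} with hP
  have hPA : ∀ i, P i ⊆ A := fun i x hx => hx.1
  have hdP : Pairwise (Function.onFun Disjoint P) := by
    intro i j hne
    rw [Function.onFun, Set.disjoint_left]
    rintro a ⟨-, hfi, hmin_i⟩ ⟨-, hfj, hmin_j⟩
    exact hne (le_antisymm (hmin_i j hfj) (hmin_j i hfi))
  have hUP : (⋃ i, P i) = A := by
    apply subset_antisymm (iUnion_subset hPA)
    intro a ha
    obtain ⟨g₀, hg₀s, hg₀⟩ := hs a ha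
    have hj₀ : f a = g (s.equivFin ⟨g₀, hg₀s⟩) • a := by
      simp only [hg, Equiv.symm_apply_apply]
      exact hg₀
    set T : Finset (Fin s.card) := Finset.univ.filter (fun j => f a = g j • a) with hT
    have hTne : T.Nonempty := ⟨s.equivFin ⟨g₀, hg₀s⟩, by
      simp only [hT, Finset.mem_filter, Finset.mem_univ, true_and]; exact hj₀⟩
    refine mem_iUnion.mpr ⟨T.min' hTne, ha, ?_, ?_⟩
    · have := T.min'_mem hTne
      simp only [hT, Finset.mem_filter] at this
      exact this.2
    · intro j hj
      exact T.min'_le j (by simp only [hT, Finset.mem_filter, Finset.mem_univ, true_and]; exact hj)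
  have himgP : ∀ i, f '' P i = g i • P i := by
    intro i
    rw [show g i • P i = (fun x => g i • x) '' P i from (Set.image_smul).symm]
    exact image_congr fun x hx => hx.2.1
  refine ⟨s.card, P, g, hdP, hUP, ?_, ?_⟩
  · intro i j hne
    rw [Function.onFun, ← himgP, ← himgP]
    exact (hdP hne).image hinj (hPA i) (hPA j)
  · simp_rw [← himgP, ← image_iUnion, hUP, himg]

lemma equidecomp_sandwich {G X : Type*} [Group G] [MulAction G X] {A A₁ B : Set X}
    (h : EquidecompG G A A₁) (h1 : A₁ ⊆ B) (h2 : B ⊆ A) : EquidecompG G A B := by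
  classical
  obtain ⟨f, hinj, himg, s, hs⟩ := exists_map_of_equidecomp h
  have hfA : ∀ a ∈ A, f a ∈ A := fun a ha => h2 (h1 (himg ▸ mem_image_of_mem f ha))
  set D : Set X := ⋃ n, f^[n] '' (A \ B) with hD
  have hsubD : ∀ n, f^[n] '' (A \ B) ⊆ A := by
    intro n
    induction n with
    | zero => simpa using diff_subset
    | succ n ih =>
      rw [Function.iterate_succ', Set.image_comp]
      rintro x ⟨y, hy, rfl⟩
      exact hfA y (ih hy)
  have hDA : D ⊆ A := iUnion_subset hsubD
  have hfD : ∀ x ∈ D, f x ∈ D := by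
    intro x hx
    obtain ⟨n, y, hy, rfl⟩ := mem_iUnion.mp hx
    exact mem_iUnion.mpr ⟨n + 1, y, hy, Function.iterate_succ_apply' f n y⟩
  set h' : X → X := fun x => if x ∈ D then f x else x with hh'
  have hABD : A \ B ⊆ D := fun x hx => mem_iUnion.mpr ⟨0, by simpa using hx⟩
  refine equidecomp_of_map h' ?_ ?_ (insert 1 s) ?_
  · intro a ha b hb hab
    simp only [hh'] at hab
    by_cases haD : a ∈ D <;> by_cases hbD : b ∈ D
    · rw [if_pos haD, if_pos hbD] at hab
      exact hinj ha hb hab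
    · rw [if_pos haD, if_neg hbD] at hab
      exact absurd (hab ▸ hfD a haD) hbD
    · rw [if_neg haD, if_pos hbD] at hab
      exact absurd (hab ▸ hfD b hbD) haD
    · rwa [if_neg haD, if_neg hbD] at hab
  · apply subset_antisymm
    · rintro x ⟨a, ha, rfl⟩
      simp only [hh']
      by_cases haD : a ∈ D
      · rw [if_pos haD]
        exact h1 (himg ▸ mem_image_of_mem f ha)
      · rw [if_neg haD]
        by_contra hnb
        exact haD (hABD ⟨ha, hnb⟩)
    · intro b hb
      by_cases hbD : b ∈ D
      · obtain ⟨n, y, hy, rfl⟩ := mem_iUnion.mp hbD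
        cases n with
        | zero =>
          simp only [Function.iterate_zero, id_eq] at hb
          exact absurd hb hy.2
        | succ m =>
          have hc : f^[m] y ∈ D := mem_iUnion.mpr ⟨m, y, hy, rfl⟩
          refine ⟨f^[m] y, hDA hc, ?_⟩
          simp only [hh', if_pos hc]
          exact (Function.iterate_succ_apply' f m y).symm
      · refine ⟨b, h2 hb, ?_⟩
        simp only [hh', if_neg hbD]
  · intro a ha
    by_cases haD : a ∈ D
    · obtain ⟨g', hg's, hg'⟩ := hs a ha
      exact ⟨g', Finset.mem_insert_of_mem hg's, by simp only [hh', if_pos haD]; exact hg'⟩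
    · exact ⟨1, Finset.mem_insert_self 1 s, by simp only [hh', if_neg haD, one_smul]⟩

/-- A nonempty set `A` is `G`-paradoxical iff it contains two disjoint subsets,
each `G`-equidecomposable with `A`. -/
theorem paradoxical_iff_disjoint_subsets {G X : Type*} [Group G] [MulAction G X]
    {A : Set X} (hA : A.Nonempty) :
    Paradoxical G A ↔ ∃ A₁ A₂ : Set X, A₁ ⊆ A ∧ A₂ ⊆ A ∧ Disjoint A₁ A₂ ∧
      EquidecompG G A₁ A ∧ EquidecompG G A₂ A := by
  constructor
  · rintro ⟨-, B, C, hunion, hdisj, h1, h2⟩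
    exact ⟨B, C, hunion ▸ Set.subset_union_left, hunion ▸ Set.subset_union_right,
      hdisj, h1, h2⟩
  · rintro ⟨A₁, A₂, h1A, h2A, hdisj, he1, he2⟩
    refine ⟨hA, A \ A₂, A₂, ?_, Set.disjoint_sdiff_left, ?_, he2⟩
    · rw [Set.diff_union_self, Set.union_eq_left.mpr h2A]
    · have hsub : A₁ ⊆ A \ A₂ := Set.subset_diff.mpr ⟨h1A, hdisj⟩
      exact (equidecomp_sandwich he1.symm' hsub Set.diff_subset).symm'
end

section
/- The rotations σ about the x-axis and τ about the y-axis, both by the angle θ = arccos(4/5), freely generate a free subgroup of SO(3) of rank 2. -/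
open scoped Pointwise

abbrev E3 : Type := EuclideanSpace ℝ (Fin 3)
abbrev SO3 : Type := Matrix.specialOrthogonalGroup (Fin 3) ℝ

noncomputable instance : Group SO3 :=
  { (inferInstance : Monoid SO3) with
    inv := fun A => ⟨star A.1, by
      refine ⟨Unitary.star_mem A.2.1, ?_⟩
      show (star A.1).det = 1
      have h : A.1.det = 1 := A.2.2
      rw [Matrix.star_eq_conjTranspose, Matrix.det_conjTranspose, h]
      simp⟩
    inv_mul_cancel := fun A => Subtype.ext (Matrix.mem_unitaryGroup_iff'.mp A.2.1) }

noncomputable instance : SMul SO3 E3 := ⟨fun g x => WithLp.toLp 2 (g.1.mulVec x)⟩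

/-- `SO3` acts on `ℝ³` by rotation (matrix-vector multiplication). -/
noncomputable instance : MulAction SO3 E3 where
  one_smul x := congrArg (WithLp.toLp 2) (Matrix.one_mulVec x.ofLp)
  mul_smul g h x := congrArg (WithLp.toLp 2) (Matrix.mulVec_mulVec x.ofLp g.1 h.1).symm

lemma SO3.smul_add (g : SO3) (x y : E3) : g • (x + y) = g • x + g • y :=
  congrArg (WithLp.toLp 2) (Matrix.mulVec_add g.1 x.ofLp y.ofLp)

lemma SO3.smul_neg (g : SO3) (x : E3) : g • (-x) = -(g • x) :=
  congrArg (WithLp.toLp 2) (Matrix.mulVec_neg x.ofLp g.1)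

/-- The rotation about the x-axis by the angle `θ = arccos (4/5)`. -/
noncomputable def sigmaMat : Matrix (Fin 3) (Fin 3) ℝ :=
  (1 / 5 : ℝ) • !![5, 0, 0; 0, 4, -3; 0, 3, 4]

/-- The rotation about the y-axis by the angle `θ = arccos (4/5)`. -/
noncomputable def tauMat : Matrix (Fin 3) (Fin 3) ℝ :=
  (1 / 5 : ℝ) • !![4, 0, 3; 0, 5, 0; -3, 0, 4]

namespace SigmaTauFreeAux

/-- The integer form of applying one letter: `5 ·` (the letter's rotation action). -/
def step (x : Fin 2 × Bool) (v : Fin 3 → ℤ) : Fin 3 → ℤ :=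
  if x.1 = 0 then
    if x.2 then ![5 * v 0, 4 * v 1 - 3 * v 2, 3 * v 1 + 4 * v 2]
    else ![5 * v 0, 4 * v 1 + 3 * v 2, -(3 * v 1) + 4 * v 2]
  else
    if x.2 then ![4 * v 0 + 3 * v 2, 5 * v 1, -(3 * v 0) + 4 * v 2]
    else ![4 * v 0 - 3 * v 2, 5 * v 1, 3 * v 0 + 4 * v 2]

/-- `5 ^ |L| ·` (the word `L` applied to the vector `(1,1,0)`), as an integer vector. -/
def N (L : List (Fin 2 × Bool)) : Fin 3 → ℤ := L.foldr step ![1, 1, 0]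

def sgn (b : Bool) : ZMod 5 := if b then 1 else -1

/-- The mod `5` invariant, depending on the most recently applied letter `x`. -/
def Good (x : Fin 2 × Bool) (v : Fin 3 → ℤ) : Prop :=
  if x.1 = 0 then
    ((v 0 : ZMod 5) = 0 ∧ (v 1 : ZMod 5) ≠ 0 ∧ (v 2 : ZMod 5) = 2 * sgn x.2 * (v 1 : ZMod 5))
  else
    ((v 1 : ZMod 5) = 0 ∧ (v 0 : ZMod 5) ≠ 0 ∧ (v 2 : ZMod 5) = 3 * sgn x.2 * (v 0 : ZMod 5))

/-- The real matrix of a letter. -/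
noncomputable def F (x : Fin 2 × Bool) : Matrix (Fin 3) (Fin 3) ℝ :=
  cond x.2 (if x.1 = 0 then sigmaMat else tauMat)
    (star (if x.1 = 0 then sigmaMat else tauMat))

lemma bridge : ∀ L : List (Fin 2 × Bool),
    ((L.map F).prod).mulVec ![1, 1, 0] = fun j => ((N L j : ℤ) : ℝ) / 5 ^ L.length := by
  intro L
  induction L with
  | nil =>
    funext j
    fin_cases j <;> simp [N, Matrix.one_mulVec]
  | cons x L ih =>
    have h5 : (5:ℝ) ^ L.length ≠ 0 := by positivity
    rcases x with ⟨i, b⟩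
    have hN : N ((i, b) :: L) = step (i, b) (N L) := rfl
    fin_cases i <;> cases b <;>
    · rw [List.map_cons, List.prod_cons, ← Matrix.mulVec_mulVec, ih, hN]
      funext j
      fin_cases j <;>
        simp [F, step, sigmaMat, tauMat, Matrix.mulVec, dotProduct,
          Fin.sum_univ_three, Matrix.star_eq_conjTranspose, Matrix.transpose_apply,
          Matrix.vecHead, Matrix.vecTail] <;>
        push_cast <;> field_simp <;> (try ring) <;> simp

lemma invariant : ∀ (s : List (Fin 2 × Bool)) (x : Fin 2 × Bool),
    List.Chain' (fun a b : (Fin 2 × Bool) => ¬(a.1 = b.1 ∧ a.2 = !b.2)) (x :: s) →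
    Good x (N (x :: s)) := by
  intro s
  induction s with
  | nil =>
    rintro ⟨i, b⟩ _
    fin_cases i <;> cases b <;>
      (simp only [Good, N, step, List.foldr, sgn]; norm_num; decide)
  | cons y s ih =>
    rintro ⟨i, b⟩ hchain
    obtain ⟨j, d⟩ := y
    have hR : ¬((i, b).1 = (j, d).1 ∧ (i, b).2 = !(j, d).2) :=
      (List.isChain_cons_cons.mp hchain).1
    have hg : Good (j, d) (N ((j, d) :: s)) := ih (j, d) (List.isChain_cons_cons.mp hchain).2
    have hN : N ((i, b) :: (j, d) :: s) = step (i, b) (N ((j, d) :: s)) := rfl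
    set v := N ((j, d) :: s) with hv
    rw [hN]
    clear hv hchain ih
    fin_cases i <;> fin_cases j <;> cases b <;> cases d <;>
      first
      | (exfalso; exact hR ⟨rfl, rfl⟩)
      | (simp only [Good, step, sgn, Matrix.cons_val_zero, Matrix.cons_val_one,
           Matrix.head_cons, Matrix.cons_val_two, Matrix.tail_cons] at hg ⊢
         norm_num at hg ⊢
         obtain ⟨h1, h2, h3⟩ := hg
         push_cast
         revert h1 h2 h3
         generalize ((v 0 : ℤ) : ZMod 5) = a
         generalize ((v 1 : ℤ) : ZMod 5) = b'
         generalize ((v 2 : ℤ) : ZMod 5) = c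
         revert a b' c
         decide)

open FreeGroup in
lemma chain_of_reduce {α : Type*} [DecidableEq α] :
    ∀ L : List (α × Bool), reduce L = L →
      List.Chain' (fun a b : α × Bool => ¬(a.1 = b.1 ∧ a.2 = !b.2)) L := by
  intro L
  induction L with
  | nil => intro _; exact List.isChain_nil
  | cons x L ih =>
    intro h
    rw [reduce.cons] at h
    rcases hr : reduce L with _ | ⟨y, t⟩
    · rw [hr] at h
      simp only at h
      injection h with _ h2
      subst h2
      exact List.isChain_singleton x
    · rw [hr] at h
      simp only at h
      by_cases hc : x.1 = y.1 ∧ x.2 = !y.2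
      · rw [if_pos hc] at h
        exfalso
        have h1 := congrArg List.length h
        have h2 : (reduce L).length ≤ L.length := FreeGroup.Red.length_le (reduce.red)
        rw [hr] at h2
        simp at h1 h2
        omega
      · rw [if_neg hc] at h
        have hL : L = y :: t := by
          injection h with _ h2
          exact h2.symm
        have hrL : reduce L = L := by rw [hr, hL]
        have := ih hrL
        rw [hL]
        rw [hL] at this
        exact List.IsChain.cons_cons hc this

end SigmaTauFreeAux


/-- `σ` and `τ` belong to `SO(3)` and freely generate a free subgroup of rank 2:
the induced homomorphism from the free group on two generators is injective, i.e. no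
nonempty reduced word in `σ, τ, σ⁻¹, τ⁻¹` is the identity. -/
theorem sigma_tau_free :
    ∃ (hσ : sigmaMat ∈ Matrix.specialOrthogonalGroup (Fin 3) ℝ)
      (hτ : tauMat ∈ Matrix.specialOrthogonalGroup (Fin 3) ℝ),
      Function.Injective
        (FreeGroup.lift (fun i : Fin 2 =>
          if i = 0 then (⟨sigmaMat, hσ⟩ : SO3) else (⟨tauMat, hτ⟩ : SO3))) := by

  open SigmaTauFreeAux in
  have hσ : sigmaMat ∈ Matrix.specialOrthogonalGroup (Fin 3) ℝ := by
    rw [Matrix.mem_specialOrthogonalGroup_iff, Matrix.mem_orthogonalGroup_iff]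
    constructor
    · ext i j
      fin_cases i <;> fin_cases j <;>
        simp [sigmaMat, Matrix.mul_apply, Fin.sum_univ_three, Matrix.star_eq_conjTranspose,
          Matrix.one_apply, Matrix.transpose_apply, Matrix.vecHead, Matrix.vecTail] <;> norm_num
    · simp [sigmaMat, Matrix.det_fin_three]
      norm_num
  have hτ : tauMat ∈ Matrix.specialOrthogonalGroup (Fin 3) ℝ := by
    rw [Matrix.mem_specialOrthogonalGroup_iff, Matrix.mem_orthogonalGroup_iff]
    constructor
    · ext i j
      fin_cases i <;> fin_cases j <;>
        simp [tauMat, Matrix.mul_apply, Fin.sum_univ_three, Matrix.star_eq_conjTranspose,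
          Matrix.one_apply, Matrix.transpose_apply, Matrix.vecHead, Matrix.vecTail] <;> norm_num
    · simp [tauMat, Matrix.det_fin_three]
      norm_num
  refine ⟨hσ, hτ, ?_⟩
  rw [injective_iff_map_eq_one]
  intro w hw
  by_contra hne
  have hL : w.toWord ≠ [] := fun h => hne (FreeGroup.toWord_eq_nil_iff.mp h)
  obtain ⟨x, s, hcons⟩ := List.exists_cons_of_ne_nil hL
  -- the underlying matrix of the image is the product of letter matrices
  have hcoe : ((FreeGroup.lift (fun i : Fin 2 =>
        if i = 0 then (⟨sigmaMat, hσ⟩ : SO3) else (⟨tauMat, hτ⟩ : SO3))) w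
        : Matrix (Fin 3) (Fin 3) ℝ) = ((w.toWord.map SigmaTauFreeAux.F).prod) := by
    conv_lhs => rw [← FreeGroup.mk_toWord (x := w)]
    rw [FreeGroup.lift_mk]
    rw [SubmonoidClass.coe_list_prod, List.map_map]
    have hfun : (Subtype.val ∘ fun x : Fin 2 × Bool =>
        bif x.2 then if x.1 = 0 then (⟨sigmaMat, hσ⟩ : SO3) else ⟨tauMat, hτ⟩
        else (if x.1 = 0 then (⟨sigmaMat, hσ⟩ : SO3) else ⟨tauMat, hτ⟩)⁻¹)
        = SigmaTauFreeAux.F := by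
      funext x
      rcases x with ⟨i, b⟩
      show Subtype.val _ = _
      cases b
      · show (star _ : Matrix (Fin 3) (Fin 3) ℝ) = _
        simp only [SigmaTauFreeAux.F, cond_false]
        congr 1
        exact apply_ite Subtype.val _ _ _
      · simp only [SigmaTauFreeAux.F, cond_true]
        exact apply_ite Subtype.val _ _ _
    rw [hfun]
  have hone : ((w.toWord.map SigmaTauFreeAux.F).prod) = 1 := by
    rw [← hcoe, hw]; rfl
  have hkey := SigmaTauFreeAux.bridge w.toWord
  rw [hone, Matrix.one_mulVec] at hkey
  set L := w.toWord with hLdef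
  set n := L.length with hn
  have h5 : (5:ℝ) ^ n ≠ 0 := by positivity
  have e0 : (SigmaTauFreeAux.N L 0 : ℝ) = 5 ^ n := by
    have := congrFun hkey 0
    simp only [Matrix.cons_val_zero] at this
    field_simp at this
    linarith [this]
  have e1 : (SigmaTauFreeAux.N L 1 : ℝ) = 5 ^ n := by
    have := congrFun hkey 1
    simp only [Matrix.cons_val_one, Matrix.head_cons, Matrix.cons_val_zero] at this
    field_simp at this
    linarith [this]
  have e0' : SigmaTauFreeAux.N L 0 = 5 ^ n := by exact_mod_cast e0
  have e1' : SigmaTauFreeAux.N L 1 = 5 ^ n := by exact_mod_cast e1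
  have hzero : ((5:ℤ) ^ n : ZMod 5) = 0 := by
    push_cast
    rw [(by decide : (5:ZMod 5) = 0)]
    exact zero_pow (by rw [hn, hcons]; simp)
  have hchain := SigmaTauFreeAux.chain_of_reduce L (FreeGroup.reduce_toWord w)
  rw [hcons] at hchain
  have hgood := SigmaTauFreeAux.invariant s x hchain
  rw [← hcons] at hgood
  rcases x with ⟨i, b⟩
  by_cases hi : (i : Fin 2) = 0
  · have : (SigmaTauFreeAux.N L 1 : ZMod 5) ≠ 0 := by
      have := hgood
      rw [SigmaTauFreeAux.Good, if_pos hi] at this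
      exact this.2.1
    apply this
    rw [e1']
    push_cast
    exact hzero
  · have : (SigmaTauFreeAux.N L 0 : ZMod 5) ≠ 0 := by
      have := hgood
      rw [SigmaTauFreeAux.Good, if_neg hi] at this
      exact this.2.1
    apply this
    rw [e0']
    push_cast
    exact hzero
end
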